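/- arXiv:2002.00720 — 6 statements merged into one kernel-verified Lean document; each statement's English description precedes it below -/
import Mathlib

section
/- There is at most one homomorphism between two models. That is, if M and M' are models (Feature Structures with Wrappings together with assignment functions) over the same signature, both satisfying the reachability constraint, and h and h' are homomorphisms from M to M', then h = h' (i.e. h_V = h'_V and h_W = h'_W). -/
/-- A signature for Feature Structures with Wrappings: finite sets of types,
attributes and relations (with arities `m > 1`), together with base-labels
(node names), node variables and wrapping variables. -/
structure Signature where
  TYPE : Type
  ATTR : Type
  REL : Type
  arity : REL → ℕ
  NNAME : Type
  NVAR : Type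
  WVAR : Type
  finTYPE : Finite TYPE
  finATTR : Finite ATTR
  finREL : Finite REL
  arity_gt_one : ∀ r, 1 < arity r

/-- A model: a Feature Structure with Wrappings `F = ⟨V, 𝒲, I⟩` together with an
assignment `g = ⟨g_N, g_W⟩`.  `V` is a nonempty set of nodes, `Wr` (`𝒲`) is a set of
pairwise disjoint nonempty subsets of `V` (the wrappings), `I` interprets types as
node sets, attributes as partial functions `V ⇀ V`, `m`-ary relations as sets of
`m`-tuples of nodes, and base-labels as (at most one) nodes; `g_N : NVAR ⇀ V` and
`g_W : WVAR ⇀ 𝒲` are partial assignment functions. -/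
structure Model (S : Signature) where
  V : Type
  v_nonempty : Nonempty V
  Wr : Set (Set V)
  wr_nonempty : ∀ W ∈ Wr, W.Nonempty
  wr_disjoint : ∀ W ∈ Wr, ∀ X ∈ Wr, W ≠ X → W ∩ X = ∅
  itype : S.TYPE → Set V
  iattr : S.ATTR → V → Option V
  irel : (r : S.REL) → Set (Fin (S.arity r) → V)
  iname : S.NNAME → Option V
  gN : S.NVAR → Option V
  gW : S.WVAR → Option (Set V)
  gW_mem : ∀ x W, gW x = some W → W ∈ Wr

namespace Model

variable {S : Signature}

/-- The wrappings of a model, as a type. -/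
def Wrp (M : Model S) : Type := {W : Set M.V // W ∈ M.Wr}

/-- Application of a path of attributes to a node (a partial function). -/
def pathApply (M : Model S) : List S.ATTR → M.V → Option M.V
  | [], v => some v
  | a :: p, v => (M.iattr a v).bind (M.pathApply p)

/-- `u` and `v` lie in the same w-set (the w-sets are the elements of the
partition `𝒲 ∪ {V \ ⋃𝒲}`). -/
def sameW (M : Model S) (u v : M.V) : Prop :=
  (∃ W ∈ M.Wr, u ∈ W ∧ v ∈ W) ∨ (u ∉ ⋃₀ M.Wr ∧ v ∉ ⋃₀ M.Wr)

/-- The reachability constraint: every node is attribute-accessible from a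
base-labelled or variable-assigned node lying in the same w-set. -/
def Reach (M : Model S) : Prop :=
  ∀ v : M.V, ∃ (u : M.V) (p : List S.ATTR),
    ((∃ b, M.iname b = some u) ∨ (∃ x, M.gN x = some u)) ∧
    M.sameW u v ∧ M.pathApply p u = some v

end Model

/-- A homomorphism `h = ⟨h_V, h_W⟩` of models, with `h_V : V → V' ⊎ 𝒲'` and
`h_W : 𝒲 → 𝒲'`, preserving types, attributes, relations, base-labels, wrapping
membership and assignments.  (Preservation statements of the form
`h_V(I(p)(v)) = I'(p)(h_V(v))` force the relevant values of `h_V` to be nodes,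
since attributes, types, relations, base-labels and node-variable assignments
only concern nodes.) -/
structure Hom {S : Signature} (M M' : Model S) where
  hV : M.V → M'.V ⊕ M'.Wrp
  hW : M.Wrp → M'.Wrp
  map_type : ∀ t v, v ∈ M.itype t → ∃ u, hV v = Sum.inl u ∧ u ∈ M'.itype t
  map_attr : ∀ a v v', M.iattr a v = some v' →
    ∃ u u', hV v = Sum.inl u ∧ hV v' = Sum.inl u' ∧ M'.iattr a u = some u'
  map_rel : ∀ r f, f ∈ M.irel r →
    ∃ f', (∀ i, hV (f i) = Sum.inl (f' i)) ∧ f' ∈ M'.irel r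
  map_name : ∀ b v, M.iname b = some v → ∃ u, M'.iname b = some u ∧ hV v = Sum.inl u
  map_wr : ∀ (W : M.Wrp), ∀ v ∈ W.val, ∃ u, hV v = Sum.inl u ∧ u ∈ (hW W).val
  map_gN : ∀ x v, M.gN x = some v → ∃ u, M'.gN x = some u ∧ hV v = Sum.inl u
  map_gW : ∀ x W, (h : M.gW x = some W) → M'.gW x = some (hW ⟨W, M.gW_mem x W h⟩).val

/-- `M` subsumes `M'` (written `M ⊑ M'`) if there is a homomorphism from `M` to `M'`. -/
def Subsumes {S : Signature} (M M' : Model S) : Prop := Nonempty (Hom M M')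

/-- The extension of the node map of a homomorphism to wrappings (via `h_W`). -/
def Hom.ext {S : Signature} {M M' : Model S} (h : Hom M M') :
    M.V ⊕ M.Wrp → M'.V ⊕ M'.Wrp :=
  Sum.elim h.hV (fun W => Sum.inr (h.hW W))

/-- There is at most one homomorphism between two models: if `M` and
`M'` are models over the same signature, both satisfying the reachability constraint,
and `h, h'` are homomorphisms from `M` to `M'`, then `h = h'`
(i.e. `h_V = h'_V` and `h_W = h'_W`). -/
theorem hom_unique {S : Signature} {M M' : Model S}
    (hM : M.Reach) (hM' : M'.Reach) (h h' : Hom M M') :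
    h.hV = h'.hV ∧ h.hW = h'.hW := by
  -- agreement along paths
  have path : ∀ (p : List S.ATTR) (u v : M.V), M.pathApply p u = some v →
      h.hV u = h'.hV u → h.hV v = h'.hV v := by
    intro p
    induction p with
    | nil =>
      intro u v huv heq
      simp [Model.pathApply] at huv
      subst huv; exact heq
    | cons a p ih =>
      intro u v huv heq
      simp [Model.pathApply, Option.bind_eq_some_iff] at huv
      obtain ⟨w, hw, hpw⟩ := huv
      obtain ⟨x, x', hx, hx', _⟩ := h.map_attr a u w hw
      obtain ⟨y, y', hy, hy', _⟩ := h'.map_attr a u w hw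
      have hxy : x = y := by
        have := hx.symm.trans (heq.trans hy)
        exact Sum.inl.inj this
      exact ih w v hpw (by
        rw [hx', hy']
        -- need x' = y' : from attribute functionality
        rename_i hxA hyA
        rw [hxy] at hxA
        rw [hxA] at hyA
        exact congrArg Sum.inl (Option.some.inj hyA))
  -- agreement on all nodes
  have hVeq : ∀ v : M.V, h.hV v = h'.hV v := by
    intro v
    obtain ⟨u, p, hlab, _, hp⟩ := hM v
    have hu : h.hV u = h'.hV u := by
      rcases hlab with ⟨b, hb⟩ | ⟨x, hx⟩
      · obtain ⟨w, hw, hwu⟩ := h.map_name b u hb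
        obtain ⟨w', hw', hwu'⟩ := h'.map_name b u hb
        rw [hwu, hwu', Option.some.inj (hw.symm.trans hw')]
      · obtain ⟨w, hw, hwu⟩ := h.map_gN x u hx
        obtain ⟨w', hw', hwu'⟩ := h'.map_gN x u hx
        rw [hwu, hwu', Option.some.inj (hw.symm.trans hw')]
    exact path p u v hp hu
  constructor
  · funext v; exact hVeq v
  · funext W
    obtain ⟨v, hv⟩ := M.wr_nonempty W.val W.property
    obtain ⟨u, hu, humem⟩ := h.map_wr W v hv
    obtain ⟨u', hu', humem'⟩ := h'.map_wr W v hv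
    have : u = u' := Sum.inl.inj ((hu.symm.trans (hVeq v)).trans hu')
    subst this
    by_contra hne
    have hneq : (h.hW W).val ≠ (h'.hW W).val := fun hv =>
      hne (Subtype.ext hv)
    have := M'.wr_disjoint _ (h.hW W).property _ (h'.hW W).property hneq
    have : u ∈ (h.hW W).val ∩ (h'.hW W).val := ⟨humem, humem'⟩
    simp_all
end

section
/- If h : M → M' and h' : M' → M are homomorphisms between two models (both satisfying the reachability constraint), then the composite homomorphism h' ∘ h : M → M equals the identity homomorphism ⟨id_V, id_𝒲⟩ on M. -/
/-- If `h : M → M'` and `h' : M' → M` are homomorphisms between two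
models (both satisfying the reachability constraint), then the composite
homomorphism `h' ∘ h : M → M` equals the identity homomorphism `⟨id_V, id_𝒲⟩` on `M`
(the identity homomorphism sends each node `v` to the node `v` and each wrapping `W`
to the wrapping `W`). -/
theorem hom_comp_eq_id {S : Signature} {M M' : Model S}
    (hM : M.Reach) (hM' : M'.Reach) (h : Hom M M') (h' : Hom M' M) :
    (∀ v : M.V, h'.ext (h.hV v) = Sum.inl v) ∧
    (∀ W : M.Wrp, h'.hW (h.hW W) = W) := by
  have key : ∀ v : M.V, h'.ext (h.hV v) = Sum.inl v := by
    intro v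
    obtain ⟨u, p, hsrc, hsw, hpath⟩ := hM v
    have hu : h'.ext (h.hV u) = Sum.inl u := by
      rcases hsrc with ⟨b, hb⟩ | ⟨x, hx⟩
      · obtain ⟨u1, hu1, hhv⟩ := h.map_name b u hb
        obtain ⟨u2, hu2, hhv'⟩ := h'.map_name b u1 hu1
        have : u2 = u := by rw [hb] at hu2; exact (Option.some_injective _ hu2).symm
        rw [hhv]; simp [Hom.ext, hhv', this]
      · obtain ⟨u1, hu1, hhv⟩ := h.map_gN x u hx
        obtain ⟨u2, hu2, hhv'⟩ := h'.map_gN x u1 hu1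
        have : u2 = u := by rw [hx] at hu2; exact (Option.some_injective _ hu2).symm
        rw [hhv]; simp [Hom.ext, hhv', this]
    clear hsrc hsw
    induction p generalizing u with
    | nil =>
      simp [Model.pathApply] at hpath
      rwa [hpath] at hu
    | cons a p ih =>
      simp only [Model.pathApply, Option.bind_eq_some_iff] at hpath
      obtain ⟨w, hw, hpath⟩ := hpath
      have hwext : h'.ext (h.hV w) = Sum.inl w := ?_
      exact ih w hpath hwext
      obtain ⟨x1, x2, hx1, hx2, hattr⟩ := h.map_attr a u w hw
      obtain ⟨y1, y2, hy1, hy2, hattr'⟩ := h'.map_attr a x1 x2 hattr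
      have hyu : y1 = u := by
        rw [hx1] at hu; simp [Hom.ext, hy1] at hu; exact hu
      rw [hyu] at hattr'
      have : y2 = w := by
        rw [hw] at hattr'; exact Option.some_injective _ hattr'.symm
      rw [hx2]; simp [Hom.ext, hy2, this]
  refine ⟨key, ?_⟩
  intro W
  obtain ⟨v, hv⟩ := M.wr_nonempty W.val W.property
  obtain ⟨u, huv, humem⟩ := h.map_wr W v hv
  obtain ⟨u', huv', humem'⟩ := h'.map_wr (h.hW W) u humem
  have hu'v : u' = v := by
    have := key v; rw [huv] at this; simp [Hom.ext, huv'] at this; exact this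
  rw [hu'v] at humem'
  by_contra hne
  have hdisj := M.wr_disjoint _ (h'.hW (h.hW W)).property _ W.property
    (fun hEq => hne (Subtype.ext hEq))
  have hmem : v ∈ (h'.hW (h.hW W)).val ∩ W.val := ⟨humem', hv⟩
  rw [hdisj] at hmem
  exact hmem
end

section
/- If there exist homomorphisms h : M → M' and h' : M' → M between two models (both satisfying the reachability constraint), then h_V maps every node of M to a node (not to a wrapping) of M', i.e. the codomain of h_V is contained in V'. -/
theorem hom_path_inl {S : Signature} {M M' : Model S} (h : Hom M M') :
    ∀ (p : List S.ATTR) (u v : M.V), M.pathApply p u = some v →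
      (∃ w, h.hV u = Sum.inl w) → ∃ w, h.hV v = Sum.inl w := by
  intro p
  induction p with
  | nil => intro u v hp _; simp [Model.pathApply] at hp; subst hp; assumption
  | cons a p ih =>
    intro u v hp hu
    simp [Model.pathApply, Option.bind_eq_some_iff] at hp
    obtain ⟨m, hm, hrest⟩ := hp
    obtain ⟨x, x', hx, hx', _⟩ := h.map_attr a u m hm
    exact ih m v hrest ⟨x', hx'⟩

/-- If there exist homomorphisms `h : M → M'` and `h' : M' → M`
between two models (both satisfying the reachability constraint), then `h_V` maps
every node of `M` to a node (not to a wrapping) of `M'`, i.e. the codomain of `h_V`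
is contained in `V'`. -/
theorem hom_nodes_to_nodes {S : Signature} {M M' : Model S}
    (hM : M.Reach) (hM' : M'.Reach) (h : Hom M M') (h' : Hom M' M) :
    ∀ v : M.V, ∃ u : M'.V, h.hV v = Sum.inl u := by
  intro v
  obtain ⟨u, p, hsrc, _, hpath⟩ := hM v
  apply hom_path_inl h p u v hpath
  rcases hsrc with ⟨b, hb⟩ | ⟨x, hx⟩
  · obtain ⟨w, _, hw⟩ := h.map_name b u hb
    exact ⟨w, hw⟩
  · obtain ⟨w, _, hw⟩ := h.map_gN x u hx
    exact ⟨w, hw⟩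
end

section
/- Mutual subsumption is equivalent to isomorphism: two models M and M' (both satisfying the reachability constraint) satisfy M ⊑ M' and M' ⊑ M if and only if M and M' are isomorphic. In particular, if h : M → M' and h' : M' → M are homomorphisms, then h is an isomorphism with inverse h'. -/
/-- `τ` is an inverse of the homomorphism `σ`: `σ_V` takes values in nodes only,
the (corestricted) node maps and the wrapping maps are mutually inverse bijections.
(Since `τ` is itself a homomorphism, this says exactly that `σ` is an isomorphism
with inverse `τ`.) -/
def Hom.IsInverse {S : Signature} {M M' : Model S} (σ : Hom M M') (τ : Hom M' M) : Prop :=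
  (∀ v : M.V, ∃ u : M'.V, σ.hV v = Sum.inl u ∧ τ.hV u = Sum.inl v) ∧
  (∀ u : M'.V, ∃ v : M.V, τ.hV u = Sum.inl v ∧ σ.hV v = Sum.inl u) ∧
  (∀ W : M.Wrp, τ.hW (σ.hW W) = W) ∧ (∀ W : M'.Wrp, σ.hW (τ.hW W) = W)

/-- A homomorphism `σ : M → M'` is an isomorphism if `σ_V` takes values in `V'` only,
`σ_V` and `σ_W` are bijections, and the inverse is a homomorphism `M' → M`. -/
def Hom.IsIso {S : Signature} {M M' : Model S} (σ : Hom M M') : Prop :=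
  ∃ τ : Hom M' M, σ.IsInverse τ

/-- Two models are isomorphic if there is an isomorphism between them. -/
def Isomorphic {S : Signature} (M M' : Model S) : Prop :=
  ∃ σ : Hom M M', σ.IsIso

lemma fix_path {S : Signature} {M M' : Model S} (h : Hom M M') (h' : Hom M' M) :
    ∀ (p : List S.ATTR) (u v : M.V), M.pathApply p u = some v →
    (∃ w, h.hV u = Sum.inl w ∧ h'.hV w = Sum.inl u) →
    ∃ w, h.hV v = Sum.inl w ∧ h'.hV w = Sum.inl v := by
  intro p
  induction p with
  | nil =>
      intro u v hp hu
      simp [Model.pathApply] at hp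
      subst hp; exact hu
  | cons a p ih =>
      intro u v hp hu
      simp only [Model.pathApply, Option.bind_eq_some_iff] at hp
      obtain ⟨u1, ha, hp⟩ := hp
      obtain ⟨w, hw1, hw2⟩ := hu
      obtain ⟨w', w1, hww', hw1', hiatt⟩ := h.map_attr a u u1 ha
      have ew : w' = w := by rw [hw1] at hww'; exact (Sum.inl.inj hww').symm
      rw [ew] at hiatt
      obtain ⟨z, z1, hz, hz1, hiatt'⟩ := h'.map_attr a w w1 hiatt
      have ez : z = u := by rw [hw2] at hz; exact (Sum.inl.inj hz).symm
      rw [ez] at hiatt'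
      rw [ha] at hiatt'
      have ez1 : z1 = u1 := Option.some.inj hiatt'.symm
      rw [ez1] at hz1
      exact ih u1 v hp ⟨w1, hw1', hz1⟩

lemma fix_all {S : Signature} {M M' : Model S} (hM : M.Reach)
    (h : Hom M M') (h' : Hom M' M) :
    ∀ v : M.V, ∃ w, h.hV v = Sum.inl w ∧ h'.hV w = Sum.inl v := by
  intro v
  obtain ⟨u, p, hlab, _, hp⟩ := hM v
  refine fix_path h h' p u v hp ?_
  rcases hlab with ⟨b, hb⟩ | ⟨x, hx⟩
  · obtain ⟨w, hw1, hw2⟩ := h.map_name b u hb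
    obtain ⟨u'', hu''1, hu''2⟩ := h'.map_name b w hw1
    rw [hb] at hu''1; cases hu''1
    exact ⟨w, hw2, hu''2⟩
  · obtain ⟨w, hw1, hw2⟩ := h.map_gN x u hx
    obtain ⟨u'', hu''1, hu''2⟩ := h'.map_gN x w hw1
    rw [hx] at hu''1; cases hu''1
    exact ⟨w, hw2, hu''2⟩

lemma fix_wr {S : Signature} {M M' : Model S}
    (h : Hom M M') (h' : Hom M' M)
    (hfix : ∀ v : M.V, ∃ w, h.hV v = Sum.inl w ∧ h'.hV w = Sum.inl v) :
    ∀ W : M.Wrp, h'.hW (h.hW W) = W := by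
  intro W
  obtain ⟨v, hv⟩ := M.wr_nonempty W.val W.property
  obtain ⟨u, hu1, hu2⟩ := h.map_wr W v hv
  obtain ⟨z, hz1, hz2⟩ := h'.map_wr (h.hW W) u hu2
  obtain ⟨w, hw1, hw2⟩ := hfix v
  rw [hw1] at hu1; cases hu1
  rw [hw2] at hz1; cases hz1
  -- v lies in both wrappings, which are disjoint unless equal
  apply Subtype.ext
  by_contra hne
  have hdisj := M.wr_disjoint _ (h'.hW (h.hW W)).property _ W.property hne
  have : v ∈ (h'.hW (h.hW W)).val ∩ W.val := ⟨hz2, hv⟩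
  rw [hdisj] at this
  exact this

lemma inverse_of_homs {S : Signature} {M M' : Model S}
    (hM : M.Reach) (hM' : M'.Reach) (h : Hom M M') (h' : Hom M' M) :
    h.IsInverse h' :=
  ⟨fix_all hM h h', fix_all hM' h' h,
   fix_wr h h' (fix_all hM h h'), fix_wr h' h (fix_all hM' h' h)⟩

/-- Mutual subsumption is equivalent to isomorphism: two models `M`
and `M'` (both satisfying the reachability constraint) satisfy `M ⊑ M'` and `M' ⊑ M`
if and only if `M` and `M'` are isomorphic.  In particular, if `h : M → M'` and
`h' : M' → M` are homomorphisms, then `h` is an isomorphism with inverse `h'`. -/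
theorem mutual_subsumption_iff_iso {S : Signature} {M M' : Model S}
    (hM : M.Reach) (hM' : M'.Reach) :
    ((Subsumes M M' ∧ Subsumes M' M) ↔ Isomorphic M M') ∧
    (∀ (h : Hom M M') (h' : Hom M' M), h.IsInverse h') := by
  constructor
  · constructor
    · rintro ⟨⟨h⟩, ⟨h'⟩⟩
      exact ⟨h, h', inverse_of_homs hM hM' h h'⟩
    · rintro ⟨σ, τ, _⟩
      exact ⟨⟨σ⟩, ⟨τ⟩⟩
  · intro h h'
    exact inverse_of_homs hM hM' h h'
end

section
/- Subsumption is an order up to isomorphism: on models satisfying the reachability constraint, the subsumption relation ⊑ is reflexive, transitive, and antisymmetric up to isomorphism (i.e. M ⊑ M' and M' ⊑ M imply M and M' are isomorphic); hence ⊑ induces a partial order on isomorphism classes of models. -/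
section Aux

variable {S : Signature}

/-- The identity homomorphism. -/
def Hom.id (M : Model S) : Hom M M where
  hV := Sum.inl
  hW := _root_.id
  map_type := fun t v hv => ⟨v, rfl, hv⟩
  map_attr := fun a v v' h => ⟨v, v', rfl, rfl, h⟩
  map_rel := fun r f hf => ⟨f, fun _ => rfl, hf⟩
  map_name := fun b v h => ⟨v, h, rfl⟩
  map_wr := fun W v hv => ⟨v, rfl, hv⟩
  map_gN := fun x v h => ⟨v, h, rfl⟩
  map_gW := fun x W h => h

/-- Composition of homomorphisms. -/
def Hom.comp {M M' M'' : Model S} (σ : Hom M M') (τ : Hom M' M'') : Hom M M'' where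
  hV v := match σ.hV v with
    | Sum.inl u => τ.hV u
    | Sum.inr W => Sum.inr (τ.hW W)
  hW := τ.hW ∘ σ.hW
  map_type := fun t v hv => by
    obtain ⟨u, hu, hu'⟩ := σ.map_type t v hv
    obtain ⟨w, hw, hw'⟩ := τ.map_type t u hu'
    exact ⟨w, by simp [hu, hw], hw'⟩
  map_attr := fun a v v' h => by
    obtain ⟨u, u', hu, hu', hattr⟩ := σ.map_attr a v v' h
    obtain ⟨w, w', hw, hw', hattr'⟩ := τ.map_attr a u u' hattr
    exact ⟨w, w', by simp [hu, hw], by simp [hu', hw'], hattr'⟩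
  map_rel := fun r f hf => by
    obtain ⟨f', hf', hmem⟩ := σ.map_rel r f hf
    obtain ⟨f'', hf'', hmem'⟩ := τ.map_rel r f' hmem
    exact ⟨f'', fun i => by simp [hf' i, hf'' i], hmem'⟩
  map_name := fun b v h => by
    obtain ⟨u, hu, hv⟩ := σ.map_name b v h
    obtain ⟨w, hw, hu'⟩ := τ.map_name b u hu
    exact ⟨w, hw, by simp [hv, hu']⟩
  map_wr := fun W v hv => by
    obtain ⟨u, hu, hmem⟩ := σ.map_wr W v hv
    obtain ⟨w, hw, hmem'⟩ := τ.map_wr (σ.hW W) u hmem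
    exact ⟨w, by simp [hu, hw], hmem'⟩
  map_gN := fun x v h => by
    obtain ⟨u, hu, hv⟩ := σ.map_gN x v h
    obtain ⟨w, hw, hu'⟩ := τ.map_gN x u hu
    exact ⟨w, hw, by simp [hv, hu']⟩
  map_gW := fun x W h => by
    have h1 := σ.map_gW x W h
    have h2 := τ.map_gW x _ h1
    exact h2

/-- Any endomorphism of a model satisfying the reachability constraint is the
identity on nodes. -/
theorem Hom.endo_id {M : Model S} (hM : M.Reach) (h : Hom M M) (v : M.V) :
    h.hV v = Sum.inl v := by
  obtain ⟨u, p, hlab, hsw, hpath⟩ := hM v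
  have hu : h.hV u = Sum.inl u := by
    rcases hlab with ⟨b, hb⟩ | ⟨x, hx⟩
    · obtain ⟨u', hu', heq⟩ := h.map_name b u hb
      rw [hb] at hu'; cases hu'; exact heq
    · obtain ⟨u', hu', heq⟩ := h.map_gN x u hx
      rw [hx] at hu'; cases hu'; exact heq
  clear hlab hsw
  induction p generalizing u with
  | nil =>
    simp [Model.pathApply] at hpath; subst hpath; exact hu
  | cons a p ih =>
    simp only [Model.pathApply, Option.bind_eq_some_iff] at hpath
    obtain ⟨w, hw, hpath⟩ := hpath
    obtain ⟨u1, u1', hh1, hh2, hattr⟩ := h.map_attr a u w hw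
    rw [hu] at hh1
    obtain rfl : u = u1 := by injection hh1
    rw [hw] at hattr
    obtain rfl : w = u1' := by injection hattr
    exact ih w hpath hh2

/-- Any endomorphism of a model satisfying the reachability constraint is the
identity on wrappings. -/
theorem Hom.endo_id_W {M : Model S} (hM : M.Reach) (h : Hom M M) (W : M.Wrp) :
    h.hW W = W := by
  obtain ⟨v, hv⟩ := M.wr_nonempty W.val W.property
  obtain ⟨u, hu, hmem⟩ := h.map_wr W v hv
  rw [h.endo_id hM v] at hu; cases hu
  apply Subtype.ext
  by_contra hne
  have := M.wr_disjoint _ (h.hW W).property _ W.property hne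
  exact absurd (Set.mem_inter hmem hv) (by simp [this])

end Aux

/-- Subsumption is an order up to isomorphism: on models satisfying
the reachability constraint, `⊑` is reflexive, transitive, and antisymmetric up to
isomorphism (`M ⊑ M'` and `M' ⊑ M` imply that `M` and `M'` are isomorphic); hence it
induces a partial order on isomorphism classes of models. -/
theorem subsumption_order {S : Signature} :
    (∀ M : Model S, M.Reach → Subsumes M M) ∧
    (∀ M M' M'' : Model S, M.Reach → M'.Reach → M''.Reach →
      Subsumes M M' → Subsumes M' M'' → Subsumes M M'') ∧
    (∀ M M' : Model S, M.Reach → M'.Reach →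
      Subsumes M M' → Subsumes M' M → Isomorphic M M') := by
  refine ⟨fun M _ => ⟨Hom.id M⟩,
    fun M M' M'' _ _ _ h1 h2 => ?_, fun M M' hM hM' h1 h2 => ?_⟩
  · obtain ⟨σ⟩ := h1; obtain ⟨τ⟩ := h2; exact ⟨σ.comp τ⟩
  obtain ⟨σ⟩ := h1; obtain ⟨τ⟩ := h2
  refine ⟨σ, τ, ?_, ?_, ?_, ?_⟩
  · intro v
    have h := (σ.comp τ).endo_id hM v
    simp only [Hom.comp] at h
    rcases hσ : σ.hV v with u | W
    · exact ⟨u, rfl, by rw [hσ] at h; exact h⟩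
    · rw [hσ] at h; simp at h
  · intro u
    have h := (τ.comp σ).endo_id hM' u
    simp only [Hom.comp] at h
    rcases hτ : τ.hV u with v | W
    · exact ⟨v, rfl, by rw [hτ] at h; exact h⟩
    · rw [hτ] at h; simp at h
  · intro W
    have h := (σ.comp τ).endo_id_W hM W
    exact h
  · intro W
    have h := (τ.comp σ).endo_id_W hM' W
    exact h
end

section
/- Least upper bounds for subsumption are unique up to isomorphism: if M and M' are models and K and K' are both least upper bounds of {M, M'} with respect to the subsumption relation ⊑ (i.e. M ⊑ K, M' ⊑ K, and every K'' with M ⊑ K'' and M' ⊑ K'' satisfies K ⊑ K'', and likewise for K'), then K and K' are isomorphic. -/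
/-- `K` is a least upper bound of `{M, M'}` with respect to subsumption `⊑`
(all models considered are assumed to satisfy the reachability constraint). -/
def IsLub {S : Signature} (M M' K : Model S) : Prop :=
  Subsumes M K ∧ Subsumes M' K ∧
  ∀ K'' : Model S, K''.Reach → Subsumes M K'' → Subsumes M' K'' → Subsumes K K''

namespace LubUnique

variable {S : Signature}

/-- Identity homomorphism. -/
def idHom (M : Model S) : Hom M M where
  hV := Sum.inl
  hW := id
  map_type := fun t v hv => ⟨v, rfl, hv⟩
  map_attr := fun a v v' hv => ⟨v, v', rfl, rfl, hv⟩
  map_rel := fun r f hf => ⟨f, fun _ => rfl, hf⟩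
  map_name := fun b v hv => ⟨v, hv, rfl⟩
  map_wr := fun W v hv => ⟨v, rfl, hv⟩
  map_gN := fun x v hv => ⟨v, hv, rfl⟩
  map_gW := fun x W h => h

/-- Composition of homomorphisms. -/
def compHom {M₁ M₂ M₃ : Model S} (h1 : Hom M₁ M₂) (h2 : Hom M₂ M₃) : Hom M₁ M₃ where
  hV := fun v => h2.ext (h1.hV v)
  hW := fun W => h2.hW (h1.hW W)
  map_type := fun t v hv => by
    obtain ⟨u, hu, hu'⟩ := h1.map_type t v hv
    obtain ⟨w, hw, hw'⟩ := h2.map_type t u hu'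
    exact ⟨w, by simp [hu, Hom.ext, hw], hw'⟩
  map_attr := fun a v v' hv => by
    obtain ⟨u, u', hu, hu', hattr⟩ := h1.map_attr a v v' hv
    obtain ⟨w, w', hw, hw', hattr'⟩ := h2.map_attr a u u' hattr
    exact ⟨w, w', by simp [hu, Hom.ext, hw], by simp [hu', Hom.ext, hw'], hattr'⟩
  map_rel := fun r f hf => by
    obtain ⟨f', hf', hf'mem⟩ := h1.map_rel r f hf
    obtain ⟨f'', hf'', hf''mem⟩ := h2.map_rel r f' hf'mem
    exact ⟨f'', fun i => by simp [hf' i, Hom.ext, hf'' i], hf''mem⟩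
  map_name := fun b v hv => by
    obtain ⟨u, hu, hu'⟩ := h1.map_name b v hv
    obtain ⟨w, hw, hw'⟩ := h2.map_name b u hu
    exact ⟨w, hw, by simp [hu', Hom.ext, hw']⟩
  map_wr := fun W v hv => by
    obtain ⟨u, hu, hu'⟩ := h1.map_wr W v hv
    obtain ⟨w, hw, hw'⟩ := h2.map_wr (h1.hW W) u hu'
    exact ⟨w, by simp [hu, Hom.ext, hw], hw'⟩
  map_gN := fun x v hv => by
    obtain ⟨u, hu, hu'⟩ := h1.map_gN x v hv
    obtain ⟨w, hw, hw'⟩ := h2.map_gN x u hu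
    exact ⟨w, hw, by simp [hu', Hom.ext, hw']⟩
  map_gW := fun x W hg => by
    have h2g := h2.map_gW x _ (h1.map_gW x W hg)
    convert h2g using 3
    rfl

/-- Along attribute paths, two homomorphisms agreeing at the source agree at the target. -/
lemma hV_eq_path {M M' : Model S} (h1 h2 : Hom M M') :
    ∀ (p : List S.ATTR) (u v : M.V), M.pathApply p u = some v →
      h1.hV u = h2.hV u → h1.hV v = h2.hV v := by
  intro p
  induction p with
  | nil => intro u v hp he; simp [Model.pathApply] at hp; subst hp; exact he
  | cons a p ih =>
    intro u v hp he
    simp only [Model.pathApply, Option.bind_eq_some_iff] at hp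
    obtain ⟨w, hw, hpw⟩ := hp
    obtain ⟨x1, y1, hx1, hy1, ha1⟩ := h1.map_attr a u w hw
    obtain ⟨x2, y2, hx2, hy2, ha2⟩ := h2.map_attr a u w hw
    have hx : x1 = x2 := by
      have := he; rw [hx1, hx2] at this; exact Sum.inl.injEq _ _ ▸ (by injection this)
    subst hx
    have : y1 = y2 := by
      have := ha1.symm.trans ha2
      injection this
    subst this
    exact ih w v hpw (hy1.trans hy2.symm)

/-- Homomorphisms out of a reachable model agree on nodes. -/
lemma hV_eq {M M' : Model S} (hR : M.Reach) (h1 h2 : Hom M M') (v : M.V) :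
    h1.hV v = h2.hV v := by
  obtain ⟨u, p, hstart, _, hpath⟩ := hR v
  refine hV_eq_path h1 h2 p u v hpath ?_
  rcases hstart with ⟨b, hb⟩ | ⟨x, hx⟩
  · obtain ⟨w1, hw1, hw1'⟩ := h1.map_name b u hb
    obtain ⟨w2, hw2, hw2'⟩ := h2.map_name b u hb
    have : w1 = w2 := by have := hw1.symm.trans hw2; injection this
    rw [hw1', hw2', this]
  · obtain ⟨w1, hw1, hw1'⟩ := h1.map_gN x u hx
    obtain ⟨w2, hw2, hw2'⟩ := h2.map_gN x u hx
    have : w1 = w2 := by have := hw1.symm.trans hw2; injection this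
    rw [hw1', hw2', this]

/-- Homomorphisms out of a reachable model agree on wrappings. -/
lemma hW_eq {M M' : Model S} (hR : M.Reach) (h1 h2 : Hom M M') (W : M.Wrp) :
    h1.hW W = h2.hW W := by
  obtain ⟨v, hv⟩ := M.wr_nonempty W.val W.property
  obtain ⟨u1, hu1, hu1'⟩ := h1.map_wr W v hv
  obtain ⟨u2, hu2, hu2'⟩ := h2.map_wr W v hv
  have : u1 = u2 := by
    have := (hu1.symm.trans (hV_eq hR h1 h2 v)).trans hu2; injection this
  subst this
  apply Subtype.ext
  by_contra hne
  have := M'.wr_disjoint _ (h1.hW W).property _ (h2.hW W).property hne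
  exact absurd (Set.mem_inter hu1' hu2') (by rw [this]; exact fun h => h)

end LubUnique

/-- Least upper bounds for subsumption are unique up to
isomorphism: if `K` and `K'` are both least upper bounds of `{M, M'}` with respect
to `⊑`, then `K` and `K'` are isomorphic. -/
theorem lub_unique {S : Signature} {M M' K K' : Model S}
    (hM : M.Reach) (hM' : M'.Reach) (hK : K.Reach) (hK' : K'.Reach)
    (h : IsLub M M' K) (h' : IsLub M M' K') :
    Isomorphic K K' := by
  obtain ⟨σ⟩ := h.2.2 K' hK' h'.1 h'.2.1
  obtain ⟨τ⟩ := h'.2.2 K hK h.1 h.2.1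
  refine ⟨σ, τ, ?_, ?_, ?_, ?_⟩
  · intro v
    have := LubUnique.hV_eq hK (LubUnique.compHom σ τ) (LubUnique.idHom K) v
    simp only [LubUnique.compHom, LubUnique.idHom] at this
    cases hσ : σ.hV v with
    | inl u =>
      refine ⟨u, rfl, ?_⟩
      rw [hσ] at this; simpa [Hom.ext] using this
    | inr W => rw [hσ] at this; simp [Hom.ext] at this
  · intro u
    have := LubUnique.hV_eq hK' (LubUnique.compHom τ σ) (LubUnique.idHom K') u
    simp only [LubUnique.compHom, LubUnique.idHom] at this
    cases hτ : τ.hV u with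
    | inl v =>
      refine ⟨v, rfl, ?_⟩
      rw [hτ] at this; simpa [Hom.ext] using this
    | inr W => rw [hτ] at this; simp [Hom.ext] at this
  · intro W
    have := LubUnique.hW_eq hK (LubUnique.compHom σ τ) (LubUnique.idHom K) W
    simpa [LubUnique.compHom, LubUnique.idHom] using this
  · intro W
    have := LubUnique.hW_eq hK' (LubUnique.compHom τ σ) (LubUnique.idHom K') W
    simpa [LubUnique.compHom, LubUnique.idHom] using this
end
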